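/- Let X be a reflexive Banach space and I: X → ℝ a C¹ functional that is weakly lower semi-continuous and satisfies the coercivity estimate (DI(w))(w) ≥ C₁‖w‖ − C₂ for all w ∈ X with constants C₁, C₂ > 0. Then I has a critical point in X. -/

import Mathlib

open Filter

theorem stmt9 {X : Type*} [NormedAddCommGroup X] [NormedSpace ℝ X]
    [CompleteSpace X]
    (hrefl : Function.Surjective (NormedSpace.inclusionInDoubleDual ℝ X))
    (I : X → ℝ) (hdiff : Differentiable ℝ I)
    (hC1 : Continuous fun w => fderiv ℝ I w)
    (hlsc : ∀ (u : ℕ → X) (x : X),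
      (∀ φ : X →L[ℝ] ℝ, Tendsto (fun n => φ (u n)) atTop (nhds (φ x))) →
      I x ≤ liminf (fun n => I (u n)) atTop)
    (C₁ C₂ : ℝ) (hC₁ : 0 < C₁) (hC₂ : 0 < C₂)
    (hcoer : ∀ w : X, C₁ * ‖w‖ - C₂ ≤ fderiv ℝ I w w) :
    ∃ w : X, fderiv ℝ I w = 0 := by
  classical
  -- Step 0: the halving step estimate
  have step : ∀ u : X, I ((1/2 : ℝ) • u) + (C₁ * ‖u‖ - 2*C₂)/2 ≤ I u := by
    intro u
    set K : ℝ := C₁ * ‖u‖ - 2*C₂ with hK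
    have hg : ∀ t : ℝ, HasDerivAt (fun t : ℝ => I (t • u)) ((fderiv ℝ I (t • u)) u) t := by
      intro t
      have h1 : HasDerivAt (fun t : ℝ => t • u) u t := by
        simpa using (hasDerivAt_id t).smul_const u
      exact (hdiff (t • u)).hasFDerivAt.comp_hasDerivAt t h1
    have hh : ∀ t : ℝ, HasDerivAt (fun t : ℝ => I (t • u) - K * t)
        ((fderiv ℝ I (t • u)) u - K) t := by
      intro t
      have h2 : HasDerivAt (fun t : ℝ => K * t) K t := by
        simpa using (hasDerivAt_id t).const_mul K
      exact (hg t).sub h2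
    have hmono : MonotoneOn (fun t : ℝ => I (t • u) - K * t) (Set.Icc (1/2 : ℝ) 1) := by
      apply monotoneOn_of_deriv_nonneg (convex_Icc _ _)
      · exact (fun t (_ : t ∈ Set.Icc (1/2:ℝ) 1) => ((hh t).continuousAt).continuousWithinAt)
      · exact fun t _ => ((hh t).differentiableAt).differentiableWithinAt
      · intro t ht
        rw [interior_Icc] at ht
        rw [(hh t).deriv]
        have ht0 : (0:ℝ) < t := by linarith [ht.1]
        have hc := hcoer (t • u)
        rw [map_smul, smul_eq_mul, norm_smul, Real.norm_eq_abs, abs_of_pos ht0] at hc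
        -- hc : C₁ * (t * ‖u‖) - C₂ ≤ t * (fderiv ℝ I (t • u)) u
        have h4 : 0 ≤ t * ((fderiv ℝ I (t • u)) u - K) := by
          have h5 : t * ((fderiv ℝ I (t • u)) u - K)
              = t * ((fderiv ℝ I (t • u)) u) - t * K := by ring
          rw [h5, hK]
          nlinarith [ht.1, ht.2, hC₂]
        have h6 := div_nonneg h4 ht0.le
        rwa [mul_div_cancel_left₀ _ (ne_of_gt ht0)] at h6
    have hmem1 : (1/2 : ℝ) ∈ Set.Icc (1/2 : ℝ) 1 := by norm_num
    have hmem2 : (1 : ℝ) ∈ Set.Icc (1/2 : ℝ) 1 := by norm_num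
    have h7 := hmono hmem1 hmem2 (by norm_num)
    simp only [one_smul, mul_one] at h7
    linarith
  -- Step 1: continuity of I at 0 gives a small ball bound
  obtain ⟨δ, hδpos, hδ⟩ := Metric.continuousAt_iff.mp (hdiff.continuous.continuousAt (x := 0)) 1
    one_pos
  -- Claim A: I is bounded below on every ball of radius δ/2 * 2^n
  have claimA : ∀ n : ℕ, ∃ B : ℝ, ∀ u : X, ‖u‖ ≤ (δ/2) * 2^n → B ≤ I u := by
    intro n
    induction n with
    | zero =>
      refine ⟨I 0 - 1, fun u hu => ?_⟩
      have h1 : dist u 0 < δ := by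
        rw [dist_zero_right]
        have : (δ/2) * 2^(0:ℕ) = δ/2 := by norm_num
        rw [this] at hu
        linarith
      have h2 := hδ h1
      rw [Real.dist_eq] at h2
      have := abs_lt.mp h2
      linarith [this.1]
    | succ n ih =>
      obtain ⟨B, hB⟩ := ih
      refine ⟨B - C₂, fun u hu => ?_⟩
      have h1 : ‖(1/2 : ℝ) • u‖ ≤ δ/2 * 2^n := by
        rw [norm_smul, Real.norm_eq_abs]
        rw [pow_succ] at hu
        rw [show |(1/2 : ℝ)| = 1/2 by norm_num]
        linarith
      have h2 := hB _ h1
      have h3 := step u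
      have h4 : 0 ≤ C₁ * ‖u‖ := by positivity
      linarith
  -- Claim B: global linear lower bound
  obtain ⟨ρ, hρdef⟩ : ∃ ρ : ℝ, ρ = max (δ/2) (4*C₂/C₁) := ⟨_, rfl⟩
  have hρpos : 0 < ρ := by rw [hρdef]; exact lt_max_of_lt_left (by linarith)
  obtain ⟨n₀, hn₀⟩ : ∃ n : ℕ, ρ ≤ δ/2 * 2^n := by
    obtain ⟨n, hn⟩ := pow_unbounded_of_one_lt (R := ℝ) (ρ/(δ/2)) one_lt_two
    refine ⟨n, ?_⟩
    rw [div_lt_iff₀ (by linarith : (0:ℝ) < δ/2)] at hn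
    linarith [hn]
  obtain ⟨B, hB⟩ := claimA n₀
  have hBρ : ∀ u : X, ‖u‖ ≤ ρ → B ≤ I u := fun u hu => hB u (le_trans hu hn₀)
  obtain ⟨B₁, hB₁def⟩ : ∃ B₁ : ℝ, B₁ = B - C₁ * ρ / 4 := ⟨_, rfl⟩
  have claimB : ∀ n : ℕ, ∀ u : X, ‖u‖ ≤ ρ * 2^n → B₁ + C₁ * ‖u‖ / 4 ≤ I u := by
    intro n
    induction n with
    | zero =>
      intro u hu
      rw [pow_zero, mul_one] at hu
      have h1 := hBρ u hu
      have h2 : C₁ * ‖u‖ ≤ C₁ * ρ := mul_le_mul_of_nonneg_left hu hC₁.le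
      rw [hB₁def]
      linarith
    | succ n ih =>
      intro u hu
      by_cases hc : ‖u‖ ≤ ρ * 2^n
      · exact ih u hc
      · push_neg at hc
        have h2n : (1:ℝ) ≤ 2^n := one_le_pow₀ (by norm_num : (1:ℝ) ≤ 2)
        have hub : 4*C₂/C₁ ≤ ‖u‖ := by
          have hρr : 4*C₂/C₁ ≤ ρ := by rw [hρdef]; exact le_max_right _ _
          nlinarith [hρpos, h2n, hc.le, hρr]
        have hC2u : 4*C₂ ≤ C₁ * ‖u‖ := by
          rw [div_le_iff₀ hC₁] at hub
          nlinarith [norm_nonneg u]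
        have h1 : ‖(1/2 : ℝ) • u‖ ≤ ρ * 2^n := by
          rw [norm_smul, Real.norm_eq_abs, show |(1/2 : ℝ)| = 1/2 by norm_num]
          rw [pow_succ] at hu
          linarith
        have h3 := ih _ h1
        have h4 := step u
        rw [norm_smul, Real.norm_eq_abs, show |(1/2 : ℝ)| = 1/2 by norm_num] at h3
        linarith
  have lower : ∀ u : X, B₁ + C₁ * ‖u‖ / 4 ≤ I u := by
    intro u
    obtain ⟨n, hn⟩ : ∃ n : ℕ, ‖u‖ ≤ ρ * 2^n := by
      obtain ⟨n, hn⟩ := pow_unbounded_of_one_lt (R := ℝ) (‖u‖/ρ) one_lt_two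
      refine ⟨n, ?_⟩
      rw [div_lt_iff₀ hρpos] at hn
      nlinarith
    exact claimB n u hn
  -- Step 2: minimizing sequence
  obtain ⟨m, hmdef⟩ : ∃ m : ℝ, m = sInf (Set.range I) := ⟨_, rfl⟩
  have hne : (Set.range I).Nonempty := ⟨I 0, 0, rfl⟩
  have hbdd : BddBelow (Set.range I) := by
    refine ⟨B₁, ?_⟩
    rintro _ ⟨u, rfl⟩
    have h := lower u
    have h0 : 0 ≤ C₁ * ‖u‖ / 4 := by positivity
    linarith
  have hmle : ∀ z : X, m ≤ I z := fun z => by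
    rw [hmdef]; exact csInf_le hbdd ⟨z, rfl⟩
  have hseq : ∀ n : ℕ, ∃ z : X, I z < m + 1/(n+1) := by
    intro n
    rw [hmdef]
    have h1 : sInf (Set.range I) < sInf (Set.range I) + 1/((n:ℝ)+1) := by
      have : (0:ℝ) < 1/((n:ℝ)+1) := by positivity
      linarith
    obtain ⟨b, hb1, hb2⟩ := (csInf_lt_iff hbdd hne).mp h1
    obtain ⟨z, rfl⟩ := hb1
    exact ⟨z, hb2⟩
  choose w hw using hseq
  obtain ⟨R, hRdef⟩ : ∃ R : ℝ, R = max 1 ((m + 1 - B₁) * 4 / C₁) := ⟨_, rfl⟩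
  have hwR : ∀ n, ‖w n‖ ≤ R := by
    intro n
    have h1 := lower (w n)
    have h2 := hw n
    have h3 : 1/((n:ℝ)+1) ≤ 1 := by
      rw [div_le_one (by positivity)]
      linarith [Nat.cast_nonneg (α := ℝ) n]
    have h4 : C₁ * ‖w n‖ / 4 ≤ m + 1 - B₁ := by linarith
    have h5 : ‖w n‖ ≤ (m + 1 - B₁) * 4 / C₁ := by
      rw [le_div_iff₀ hC₁]
      linarith [h4, mul_comm ‖w n‖ C₁]
    rw [hRdef]
    exact le_trans h5 (le_max_right _ _)
  have hR1 : (1:ℝ) ≤ R := by rw [hRdef]; exact le_max_left _ _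
  have hIw : Tendsto (fun n => I (w n)) atTop (nhds m) := by
    have hup : Tendsto (fun n : ℕ => m + 1/((n:ℝ)+1)) atTop (nhds m) := by
      have := tendsto_one_div_add_atTop_nhds_zero_nat.const_add m
      simpa using this
    refine tendsto_of_tendsto_of_tendsto_of_le_of_le tendsto_const_nhds hup
      (fun n => hmle (w n)) (fun n => (hw n).le)
  -- Step 3: separable closed span and norming functionals
  set Y : Submodule ℝ X := (Submodule.span ℝ (Set.range w)).topologicalClosure with hYdef
  have hwY : ∀ n, w n ∈ Y :=
    fun n => Submodule.le_topologicalClosure _ (Submodule.subset_span ⟨n, rfl⟩)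
  have hYclosed : IsClosed (Y : Set X) := Submodule.isClosed_topologicalClosure _
  have hsep : TopologicalSpace.IsSeparable (Y : Set X) := by
    rw [hYdef, Submodule.topologicalClosure_coe]
    exact ((Set.countable_range w).isSeparable.span).closure
  obtain ⟨c, hcc, hcsub⟩ := hsep
  have hcne : c.Nonempty := by
    rcases Set.eq_empty_or_nonempty c with h | h
    · exfalso
      have h0 : (0:X) ∈ (Y : Set X) := Y.zero_mem
      have := hcsub h0
      rw [h, closure_empty] at this
      exact this
    · exact h
  obtain ⟨y, hy⟩ := hcc.exists_eq_range hcne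
  have hφex : ∀ j : ℕ, ∃ φ : X →L[ℝ] ℝ, ‖φ‖ ≤ 1 ∧ φ (y j) = ‖y j‖ := by
    intro j
    by_cases h : y j = 0
    · exact ⟨0, by simp, by simp [h]⟩
    · haveI : Nontrivial X := ⟨⟨y j, 0, h⟩⟩
      obtain ⟨g, hg1, hg2⟩ := exists_dual_vector ℝ (y j) (norm_ne_zero_iff.mpr h)
      exact ⟨g, hg1.le, by exact_mod_cast hg2⟩
  choose φ hφ1 hφ2 using hφex
  -- separating on Y
  have hsepY : ∀ z, z ∈ Y → (∀ j, φ j z = 0) → z = 0 := by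
    intro z hz h0
    by_contra hz0
    have hnorm : 0 < ‖z‖ := norm_pos_iff.mpr hz0
    have hzc : z ∈ closure c := hcsub hz
    rw [Metric.mem_closure_iff] at hzc
    obtain ⟨b, hb, hdist⟩ := hzc (‖z‖/3) (by positivity)
    rw [hy] at hb
    obtain ⟨j, rfl⟩ := hb
    have h1 : (‖y j‖ : ℝ) = φ j (y j) - φ j z := by rw [hφ2 j, h0 j, sub_zero]
    have h2 : |φ j (y j) - φ j z| ≤ ‖y j - z‖ := by
      rw [← map_sub]
      calc |φ j (y j - z)| ≤ ‖φ j‖ * ‖y j - z‖ := (φ j).le_opNorm _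
        _ ≤ 1 * ‖y j - z‖ := mul_le_mul_of_nonneg_right (hφ1 j) (norm_nonneg _)
        _ = ‖y j - z‖ := one_mul _
    have h3 : ‖y j‖ ≤ ‖y j - z‖ := by
      calc ‖y j‖ = |φ j (y j) - φ j z| := by rw [← h1]; exact (abs_of_nonneg (norm_nonneg _)).symm
        _ ≤ ‖y j - z‖ := h2
    have h4 : ‖z‖ ≤ ‖z - y j‖ + ‖y j‖ := by
      calc ‖z‖ = ‖(z - y j) + y j‖ := by rw [sub_add_cancel]
        _ ≤ ‖z - y j‖ + ‖y j‖ := norm_add_le _ _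
    have h5 : ‖z - y j‖ < ‖z‖/3 := by rwa [dist_eq_norm] at hdist
    have h6 : ‖y j - z‖ = ‖z - y j‖ := norm_sub_rev _ _
    linarith
  -- Step 4: diagonal extraction
  have hmemIcc : ∀ n : ℕ, (fun j => φ j (w n)) ∈ Set.pi Set.univ (fun _ : ℕ => Set.Icc (-R) R) := by
    intro n j _
    have h1 : |φ j (w n)| ≤ R := by
      calc |φ j (w n)| ≤ ‖φ j‖ * ‖w n‖ := (φ j).le_opNorm _
        _ ≤ 1 * R := mul_le_mul (hφ1 j) (hwR n) (norm_nonneg _) zero_le_one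
        _ = R := one_mul _
    exact abs_le.mp h1
  have hcomp : IsCompact (Set.pi Set.univ fun _ : ℕ => Set.Icc (-R) R) :=
    isCompact_univ_pi fun _ => isCompact_Icc
  obtain ⟨a, -, ns, hns, hconv⟩ := hcomp.tendsto_subseq hmemIcc
  set v : ℕ → X := fun n => w (ns n) with hvdef
  have ha : ∀ j, Tendsto (fun n => φ j (v n)) atTop (nhds (a j)) := by
    intro j
    exact (tendsto_pi_nhds.mp hconv) j
  have hvR : ∀ n, ‖v n‖ ≤ R := fun n => hwR (ns n)
  have hvY : ∀ n, v n ∈ Y := fun n => hwY (ns n)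
  have hIv : Tendsto (fun n => I (v n)) atTop (nhds m) := hIw.comp hns.tendsto_atTop
  -- Step 5: weak limits along ultrafilters via reflexivity
  have key : ∀ U : Ultrafilter ℕ, (↑U : Filter ℕ) ≤ atTop →
      ∃ x : X, x ∈ Y ∧ (∀ j, φ j x = a j) ∧
        ∀ ψ : X →L[ℝ] ℝ, Tendsto (fun n => ψ (v n)) (↑U) (nhds (ψ x)) := by
    intro U hU
    have hlim : ∀ ψ : X →L[ℝ] ℝ, ∃ cψ : ℝ, Tendsto (fun n => ψ (v n)) (↑U) (nhds cψ) := by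
      intro ψ
      have hbd : ∀ n, ψ (v n) ∈ Set.Icc (-(‖ψ‖*R)) (‖ψ‖*R) := by
        intro n
        have h1 : |ψ (v n)| ≤ ‖ψ‖ * R := by
          calc |ψ (v n)| ≤ ‖ψ‖ * ‖v n‖ := ψ.le_opNorm _
            _ ≤ ‖ψ‖ * R := mul_le_mul_of_nonneg_left (hvR n) (norm_nonneg ψ)
        exact abs_le.mp h1
      have hle : (↑(U.map (fun n => ψ (v n))) : Filter ℝ) ≤
          Filter.principal (Set.Icc (-(‖ψ‖*R)) (‖ψ‖*R)) := by
        rw [Ultrafilter.coe_map, le_principal_iff, mem_map]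
        exact univ_mem' hbd
      obtain ⟨cψ, -, hc⟩ := isCompact_Icc.ultrafilter_le_nhds _ hle
      rw [Ultrafilter.coe_map] at hc
      exact ⟨cψ, hc⟩
    choose Λ hΛ using hlim
    have hadd : ∀ ψ χ : X →L[ℝ] ℝ, Λ (ψ + χ) = Λ ψ + Λ χ := by
      intro ψ χ
      refine tendsto_nhds_unique ?_ ((hΛ ψ).add (hΛ χ))
      have : (fun n => (ψ + χ) (v n)) = fun n => ψ (v n) + χ (v n) := by
        funext n; simp
      rw [← this]
      exact hΛ (ψ + χ)
    have hsmul : ∀ (r : ℝ) (ψ : X →L[ℝ] ℝ), Λ (r • ψ) = r * Λ ψ := by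
      intro r ψ
      refine tendsto_nhds_unique ?_ ((hΛ ψ).const_mul r)
      have : (fun n => (r • ψ) (v n)) = fun n => r * ψ (v n) := by
        funext n; simp
      rw [← this]
      exact hΛ (r • ψ)
    have hbound : ∀ ψ : X →L[ℝ] ℝ, ‖Λ ψ‖ ≤ R * ‖ψ‖ := by
      intro ψ
      rw [Real.norm_eq_abs]
      refine le_of_tendsto (hΛ ψ).abs (Filter.Eventually.of_forall fun n => ?_)
      calc |ψ (v n)| ≤ ‖ψ‖ * ‖v n‖ := ψ.le_opNorm _
        _ ≤ ‖ψ‖ * R := mul_le_mul_of_nonneg_left (hvR n) (norm_nonneg ψ)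
        _ = R * ‖ψ‖ := mul_comm _ _
    obtain ⟨x, hx⟩ := hrefl (LinearMap.mkContinuous
      { toFun := Λ
        map_add' := hadd
        map_smul' := fun r ψ => by simpa using hsmul r ψ } R hbound)
    have hxψ : ∀ ψ : X →L[ℝ] ℝ, ψ x = Λ ψ := by
      intro ψ
      have h1 := congrArg (fun T : StrongDual ℝ (StrongDual ℝ X) => T ψ) hx
      simpa [NormedSpace.dual_def, LinearMap.mkContinuous_apply] using h1
    have hxtend : ∀ ψ : X →L[ℝ] ℝ, Tendsto (fun n => ψ (v n)) (↑U) (nhds (ψ x)) := by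
      intro ψ
      rw [hxψ ψ]
      exact hΛ ψ
    have hxY : x ∈ Y := by
      by_contra hxY
      obtain ⟨f, t, hft, htx⟩ := geometric_hahn_banach_closed_point (Y.convex) hYclosed hxY
      have h2 : f x ≤ t :=
        le_of_tendsto (hxtend f) (Filter.Eventually.of_forall fun n => (hft _ (hvY n)).le)
      linarith
    have hxa : ∀ j, φ j x = a j := fun j =>
      tendsto_nhds_unique (hxtend (φ j)) ((ha j).mono_left hU)
    exact ⟨x, hxY, hxa, hxtend⟩
  -- Step 6: genuine weak convergence atTop
  obtain ⟨x, hxY, hxa, -⟩ := key (Ultrafilter.of atTop) (Ultrafilter.of_le _)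
  have hweak : ∀ ψ : X →L[ℝ] ℝ, Tendsto (fun n => ψ (v n)) atTop (nhds (ψ x)) := by
    intro ψ
    by_contra hcon
    rw [Metric.tendsto_atTop] at hcon
    push_neg at hcon
    obtain ⟨ε, hε, hcon⟩ := hcon
    have hfreq : ∃ᶠ n in atTop, ε ≤ dist (ψ (v n)) (ψ x) :=
      frequently_atTop.mpr fun N => hcon N
    haveI hne' : (atTop ⊓ Filter.principal {n : ℕ | ε ≤ dist (ψ (v n)) (ψ x)}).NeBot :=
      frequently_iff_neBot.mp hfreq
    obtain ⟨U', hU'le⟩ : ∃ U' : Ultrafilter ℕ,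
        (↑U' : Filter ℕ) ≤ atTop ⊓ Filter.principal {n : ℕ | ε ≤ dist (ψ (v n)) (ψ x)} :=
      ⟨Ultrafilter.of _, Ultrafilter.of_le _⟩
    obtain ⟨x', hx'Y, hx'a, hx'tend⟩ := key U' (hU'le.trans inf_le_left)
    have hxx : x' = x := by
      have hz : x' - x ∈ Y := Y.sub_mem hx'Y hxY
      have h0 : ∀ j, φ j (x' - x) = 0 := fun j => by
        rw [map_sub, hx'a, hxa, sub_self]
      exact sub_eq_zero.mp (hsepY _ hz h0)
    have htend' : Tendsto (fun n => ψ (v n)) (↑U') (nhds (ψ x)) := by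
      have := hx'tend ψ
      rwa [hxx] at this
    have hSU : ∀ᶠ n in (↑U' : Filter ℕ), ε ≤ dist (ψ (v n)) (ψ x) :=
      le_principal_iff.mp (hU'le.trans inf_le_right)
    have hd := tendsto_iff_dist_tendsto_zero.mp htend'
    have : ε ≤ 0 := ge_of_tendsto hd hSU
    linarith
  -- Step 7: conclude
  have hxm : I x = m := by
    refine le_antisymm ?_ (hmle x)
    have h1 := hlsc v x hweak
    rwa [hIv.liminf_eq] at h1
  have hmin : IsLocalMin I x :=
    Filter.Eventually.of_forall fun z => by rw [hxm]; exact hmle z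
  exact ⟨x, hmin.fderiv_eq_zero⟩
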